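/- For all nonnegative integers k and ℓ, the Gaussian binomial coefficient [k+ℓ choose k]_q equals 1 + Σ_{i=1}^{k} Σ_{j=0}^{k-i} q^i · [ℓ choose i]_q · q^{j(ℓ-i+1)} · [i+j-1 choose j]_q. -/

import Mathlib

open Polynomial Finset

/-- The Gaussian (q-)binomial coefficient `[n choose k]_q`, as a polynomial in `q`
over `ℚ`, defined by the Pascal-type recurrence
`[n+1, k+1] = [n, k] + q^(k+1) * [n, k+1]`. -/
noncomputable def gaussBinom : ℕ → ℕ → Polynomial ℚ
  | _, 0 => 1
  | 0, _ + 1 => 0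
  | n + 1, k + 1 => gaussBinom n k + Polynomial.X ^ (k + 1) * gaussBinom n (k + 1)

lemma gaussBinom_zero_right (n : ℕ) : gaussBinom n 0 = 1 := by
  cases n <;> rfl

lemma gaussBinom_of_lt : ∀ {n k : ℕ}, n < k → gaussBinom n k = 0 := by
  intro n
  induction n with
  | zero => intro k hk; match k, hk with | k + 1, _ => rfl
  | succ n ih =>
    intro k hk
    match k, hk with
    | k + 1, hk =>
      show gaussBinom n k + Polynomial.X ^ (k + 1) * gaussBinom n (k + 1) = 0
      rw [ih (by omega), ih (by omega), mul_zero, add_zero]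

lemma gaussBinom_succ_expand (m j : ℕ) :
    gaussBinom (m + 1) j =
      Polynomial.X ^ j * gaussBinom m j +
        (if j = 0 then 0 else gaussBinom m (j - 1)) := by
  cases j with
  | zero => simp [gaussBinom_zero_right]
  | succ t =>
    show gaussBinom m t + Polynomial.X ^ (t + 1) * gaussBinom m (t + 1) = _
    simp [add_comm]

lemma gaussBinom_vandermonde (m : ℕ) : ∀ n r : ℕ,
    gaussBinom (m + n) r =
      ∑ j ∈ Finset.range (r + 1),
        Polynomial.X ^ ((m - j) * (r - j)) * gaussBinom m j * gaussBinom n (r - j) := by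
  induction m with
  | zero =>
    intro n r
    rw [Finset.sum_eq_single 0]
    · simp [gaussBinom_zero_right]
    · intro j hj hj0
      rw [gaussBinom_of_lt (by omega), mul_zero, zero_mul]
    · intro h
      exact absurd (Finset.mem_range.mpr (by omega)) h
  | succ m ih =>
    intro n r
    cases r with
    | zero =>
      simp [gaussBinom_zero_right]
    | succ s =>
      have hL : m + 1 + n = (m + n) + 1 := by omega
      rw [hL]
      show gaussBinom (m + n) s + Polynomial.X ^ (s + 1) * gaussBinom (m + n) (s + 1) = _
      rw [ih n s, ih n (s + 1)]
      have step : ∀ j ∈ Finset.range (s + 1 + 1),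
          Polynomial.X ^ ((m + 1 - j) * (s + 1 - j)) * gaussBinom (m + 1) j *
              gaussBinom n (s + 1 - j) =
            Polynomial.X ^ ((m + 1 - j) * (s + 1 - j) + j) * gaussBinom m j *
                gaussBinom n (s + 1 - j) +
              (if j = 0 then 0 else
                Polynomial.X ^ ((m + 1 - j) * (s + 1 - j)) * gaussBinom m (j - 1) *
                  gaussBinom n (s + 1 - j)) := by
        intro j _
        rw [gaussBinom_succ_expand m j]
        split_ifs with h
        · subst h; simp
        · rw [pow_add]; ring
      rw [Finset.sum_congr rfl step, Finset.sum_add_distrib,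
        add_comm (∑ j ∈ Finset.range (s + 1 + 1), _)]
      congr 1
      · -- shifted sum = first IH sum
        rw [Finset.sum_range_succ' _ (s + 1)]
        simp [Nat.succ_sub_succ]
      · -- first part = X^(s+1) * second IH sum
        rw [Finset.mul_sum]
        apply Finset.sum_congr rfl
        intro j hj
        rw [Finset.mem_range] at hj
        rcases le_or_gt j m with h | h
        · have he : (m + 1 - j) * (s + 1 - j) + j = (s + 1) + (m - j) * (s + 1 - j) := by
            have h1 : m + 1 - j = (m - j) + 1 := by omega
            rw [h1, add_one_mul]
            have h2 : s + 1 - j + j = s + 1 := by omega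
            generalize (m - j) * (s + 1 - j) = c
            omega
          rw [he, pow_add]
          ring
        · rw [gaussBinom_of_lt h]
          ring

theorem gaussBinom_box_decomposition (k ℓ : ℕ) :
    gaussBinom (k + ℓ) k =
      1 + ∑ i ∈ Finset.Icc 1 k, ∑ j ∈ Finset.range (k - i + 1),
        Polynomial.X ^ i * gaussBinom ℓ i *
          (Polynomial.X ^ (j * (ℓ - i + 1)) * gaussBinom (i + j - 1) j) := by
  induction k with
  | zero =>
    simp [gaussBinom_zero_right]
  | succ k ih =>
    have hL : k + 1 + ℓ = (k + ℓ) + 1 := by omega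
    rw [hL]
    show gaussBinom (k + ℓ) k + Polynomial.X ^ (k + 1) * gaussBinom (k + ℓ) (k + 1) = _
    rw [ih]
    -- split the RHS outer sum at i = k+1
    rw [Finset.sum_Icc_succ_top (by omega : 1 ≤ k + 1)]
    -- split each inner sum at j = k+1-i
    have hsplit : ∀ i ∈ Finset.Icc 1 k,
        (∑ j ∈ Finset.range (k + 1 - i + 1),
          Polynomial.X ^ i * gaussBinom ℓ i *
            (Polynomial.X ^ (j * (ℓ - i + 1)) * gaussBinom (i + j - 1) j)) =
        (∑ j ∈ Finset.range (k - i + 1),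
          Polynomial.X ^ i * gaussBinom ℓ i *
            (Polynomial.X ^ (j * (ℓ - i + 1)) * gaussBinom (i + j - 1) j)) +
        Polynomial.X ^ i * gaussBinom ℓ i *
            (Polynomial.X ^ ((k + 1 - i) * (ℓ - i + 1)) *
              gaussBinom (i + (k + 1 - i) - 1) (k + 1 - i)) := by
      intro i hi
      rw [Finset.mem_Icc] at hi
      have h1 : k + 1 - i + 1 = (k - i + 1) + 1 := by omega
      rw [h1, Finset.sum_range_succ]
      have h2 : k - i + 1 = k + 1 - i := by omega
      rw [h2]
    rw [Finset.sum_congr rfl hsplit, Finset.sum_add_distrib]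
    have hnew : Polynomial.X ^ (k + 1) * gaussBinom (k + ℓ) (k + 1) =
        (∑ i ∈ Finset.Icc 1 k,
          Polynomial.X ^ i * gaussBinom ℓ i *
            (Polynomial.X ^ ((k + 1 - i) * (ℓ - i + 1)) *
              gaussBinom (i + (k + 1 - i) - 1) (k + 1 - i))) +
        ∑ j ∈ Finset.range (k + 1 - (k + 1) + 1),
          Polynomial.X ^ (k + 1) * gaussBinom ℓ (k + 1) *
            (Polynomial.X ^ (j * (ℓ - (k + 1) + 1)) * gaussBinom (k + 1 + j - 1) j) := by
      have hc : k + ℓ = ℓ + k := by omega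
      rw [hc, gaussBinom_vandermonde ℓ k (k + 1), Finset.mul_sum,
        Finset.sum_range_succ' _ (k + 1)]
      simp only [Nat.sub_zero, Nat.sub_self, Nat.succ_sub_succ]
      rw [gaussBinom_of_lt (by omega : k < k + 1), mul_zero, mul_zero, add_zero,
        Finset.sum_range_succ]
      have hIcc : (Finset.Icc 1 k) = (Finset.range k).image (· + 1) := by
        ext x
        simp only [Finset.mem_Icc, Finset.mem_image, Finset.mem_range]
        constructor
        · rintro ⟨h1, h2⟩
          exact ⟨x - 1, by omega, by omega⟩
        · rintro ⟨a, ha, rfl⟩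
          omega
      rw [hIcc, Finset.sum_image (by intro a _ b _ h; dsimp only at h; omega), Finset.sum_range_succ,
        Finset.sum_range_zero, zero_add]
      refine congrArg₂ (· + ·) ?_ ?_
      · apply Finset.sum_congr rfl
        intro x hx
        rw [Finset.mem_range] at hx
        simp only [Nat.succ_sub_succ]
        have h1 : x + 1 + (k - x) - 1 = k := by omega
        rw [h1]
        rcases le_or_gt (x + 1) ℓ with h | h
        · have h2 : ℓ - (x + 1) + 1 = ℓ - x := by omega
          rw [h2]
          have h3 : k + 1 + (ℓ - (x + 1)) * (k - x) = x + 1 + ((k - x) * (ℓ - x)) := by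
            have h4 : ℓ - x = (ℓ - (x + 1)) + 1 := by omega
            rw [h4, Nat.mul_add, Nat.mul_one, Nat.mul_comm]
            generalize (ℓ - (x + 1)) * (k - x) = c
            omega
          calc Polynomial.X ^ (k + 1) *
                (Polynomial.X ^ ((ℓ - (x + 1)) * (k - x)) * gaussBinom ℓ (x + 1) *
                  gaussBinom k (k - x))
              = Polynomial.X ^ (k + 1 + (ℓ - (x + 1)) * (k - x)) * gaussBinom ℓ (x + 1) *
                  gaussBinom k (k - x) := by rw [pow_add]; ring
            _ = Polynomial.X ^ (x + 1 + (k - x) * (ℓ - x)) * gaussBinom ℓ (x + 1) *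
                  gaussBinom k (k - x) := by rw [h3]
            _ = _ := by rw [pow_add]; ring
        · rw [gaussBinom_of_lt h]
          ring
      · simp [gaussBinom_zero_right]
    rw [hnew]
    simp only [add_assoc]
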